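/- For d ∈ {2,3} and every δ ∈ (0,1/2), the integral ∫_{ℝ×ℝ^d} P(t,x) · |x| · ρ(‖(t,x)‖)² dt dx is finite. In particular, whenever |κ(z)| ≤ ρ(‖z‖)², the ℝ^d-valued constant ∫_{ℝ×ℝ^d} P(z) · x · κ(z) dz converges absolutely. -/

import Mathlib

open Real MeasureTheory

/-- Space-time `ℝ × ℝ^d`. -/
abbrev SpaceTime (d : ℕ) := ℝ × EuclideanSpace ℝ (Fin d)

/-- The parabolic norm `‖(t,x)‖ = (|x|⁴ + t²)^{1/4}`. -/
noncomputable def pnorm {d : ℕ} (z : SpaceTime d) : ℝ :=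
  (‖z.2‖ ^ 4 + z.1 ^ 2) ^ ((1 : ℝ) / 4)

/-- The heat kernel on `ℝ × ℝ^d`. -/
noncomputable def heatP (d : ℕ) (z : SpaceTime d) : ℝ :=
  if 0 < z.1 then (4 * π * z.1) ^ (-(d : ℝ) / 2) * Real.exp (-‖z.2‖ ^ 2 / (4 * z.1))
  else 0

/-- `ρ(r)² = min (r^{-(1-2δ)}) (r^{-(d+2)-2δ})`. -/
noncomputable def rhoSq (d : ℕ) (δ r : ℝ) : ℝ :=
  min (r ^ (-(1 - 2 * δ))) (r ^ (-((d : ℝ) + 2) - 2 * δ))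

/-! ### Auxiliary definitions and lemmas -/

/-- Temporal weight `w(t) = min (t^{(2δ-1)/2}) (t^{-(d+2)/2 - δ})`. -/
noncomputable def wfun (d : ℕ) (δ t : ℝ) : ℝ :=
  min (t ^ ((2 * δ - 1) / 2)) (t ^ (-((d : ℝ) + 2) / 2 - δ))

/-- Dominating function for the heat-kernel integrand. -/
noncomputable def Gfun (d : ℕ) (δ : ℝ) (z : SpaceTime d) : ℝ :=
  if 0 < z.1 then
    ((4 * π * z.1) ^ (-(d : ℝ) / 2) * (4 * Real.sqrt z.1) * wfun d δ z.1) *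
      Real.exp (-(1 / (8 * z.1)) * ‖z.2‖ ^ 2)
  else 0

lemma heatP_nonneg (d : ℕ) (z : SpaceTime d) : 0 ≤ heatP d z := by
  unfold heatP; split
  · positivity
  · exact le_refl 0

lemma measurable_heatP (d : ℕ) : Measurable (heatP d) := by
  unfold heatP
  refine Measurable.ite (measurableSet_lt measurable_const measurable_fst) ?_ measurable_const
  fun_prop

lemma measurable_pnorm {d : ℕ} : Measurable (pnorm (d := d)) := by
  unfold pnorm; fun_prop

lemma measurable_rhoSq_pnorm {d : ℕ} (δ : ℝ) :
    Measurable (fun z : SpaceTime d => rhoSq d δ (pnorm z)) := by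
  unfold rhoSq pnorm; fun_prop

lemma rhoSq_nonneg {d : ℕ} (δ r : ℝ) (hr : 0 ≤ r) : 0 ≤ rhoSq d δ r :=
  le_min (Real.rpow_nonneg hr _) (Real.rpow_nonneg hr _)

lemma pnorm_nonneg {d : ℕ} (z : SpaceTime d) : 0 ≤ pnorm z :=
  Real.rpow_nonneg (by positivity) _

lemma sqrt_mul_rpow {t : ℝ} (ht : 0 < t) (c : ℝ) :
    Real.sqrt t * t ^ c = t ^ (1 / 2 + c) := by
  rw [Real.sqrt_eq_rpow, ← Real.rpow_add ht]

/-- `√t ≤ pnorm (t,x)` for `t > 0`. -/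
lemma sqrt_le_pnorm {d : ℕ} {t : ℝ} (ht : 0 < t) (x : EuclideanSpace ℝ (Fin d)) :
    Real.sqrt t ≤ pnorm (t, x) := by
  unfold pnorm
  have h4 : Real.sqrt t = (t ^ 2) ^ ((1 : ℝ) / 4) := by
    rw [← Real.rpow_natCast t 2, ← Real.rpow_mul ht.le, Real.sqrt_eq_rpow]
    norm_num
  rw [h4]
  exact Real.rpow_le_rpow (by positivity) (le_add_of_nonneg_left (by positivity)) (by norm_num)

/-- key pointwise bound on `rhoSq` for `t > 0`. -/
lemma rhoSq_le_wfun {d : ℕ} {δ : ℝ} (hδ : δ ∈ Set.Ioo (0 : ℝ) (1 / 2)) {t : ℝ} (ht : 0 < t)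
    (x : EuclideanSpace ℝ (Fin d)) :
    rhoSq d δ (pnorm (t, x)) ≤ wfun d δ t := by
  have hsq := sqrt_le_pnorm (d := d) ht x
  have hsp : 0 < Real.sqrt t := Real.sqrt_pos.mpr ht
  have hsrw : ∀ c : ℝ, Real.sqrt t ^ c = t ^ (c / 2) := by
    intro c
    rw [Real.sqrt_eq_rpow, ← Real.rpow_mul ht.le]
    ring_nf
  have hb1 : rhoSq d δ (pnorm (t, x)) ≤ t ^ ((2 * δ - 1) / 2) := by
    refine le_trans (min_le_left _ _) ?_
    have h := Real.rpow_le_rpow_of_nonpos hsp hsq (show -(1 - 2 * δ) ≤ 0 by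
      have := hδ.2; rw [Set.mem_Ioo] at hδ; linarith [hδ.2])
    refine le_trans h ?_
    rw [hsrw]
    apply le_of_eq
    congr 1
    ring
  refine le_min hb1 ?_
  rcases le_or_gt t 1 with h1 | h1
  · refine le_trans hb1 ?_
    apply Real.rpow_le_rpow_of_exponent_ge ht h1
    rw [Set.mem_Ioo] at hδ
    have hd0 : (0 : ℝ) ≤ (d : ℝ) := Nat.cast_nonneg d
    linarith [hδ.1, hδ.2]
  · refine le_trans (min_le_right _ _) ?_
    have h := Real.rpow_le_rpow_of_nonpos hsp hsq
      (show -((d : ℝ) + 2) - 2 * δ ≤ 0 by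
        have hd0 : (0 : ℝ) ≤ (d : ℝ) := Nat.cast_nonneg d
        rw [Set.mem_Ioo] at hδ; linarith [hδ.1])
    refine le_trans h ?_
    rw [hsrw]
    apply le_of_eq
    congr 1
    ring

/-- Gaussian moment bound: `u e^{-u²/(4t)} ≤ 4 √t e^{-u²/(8t)}`. -/
lemma gauss_moment_bound {t u : ℝ} (ht : 0 < t) (hu : 0 ≤ u) :
    u * Real.exp (-u ^ 2 / (4 * t)) ≤ 4 * Real.sqrt t * Real.exp (-(1 / (8 * t)) * u ^ 2) := by
  have hsp : 0 < Real.sqrt t := Real.sqrt_pos.mpr ht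
  have h1 : Real.exp (-u ^ 2 / (4 * t)) =
      Real.exp (-(1 / (8 * t)) * u ^ 2) * Real.exp (-(1 / (8 * t)) * u ^ 2) := by
    rw [← Real.exp_add]
    congr 1
    field_simp
    ring
  have key : u * Real.exp (-(1 / (8 * t)) * u ^ 2) ≤ 4 * Real.sqrt t := by
    rcases le_or_gt u (2 * Real.sqrt t) with h | h
    · calc u * Real.exp (-(1 / (8 * t)) * u ^ 2) ≤ u * 1 := by
            apply mul_le_mul_of_nonneg_left _ hu
            apply Real.exp_le_one_iff.mpr
            have h8 : (0:ℝ) ≤ 1 / (8 * t) * u ^ 2 := by positivity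
            linarith
        _ = u := mul_one u
        _ ≤ 2 * Real.sqrt t := h
        _ ≤ 4 * Real.sqrt t := by nlinarith [hsp]
    · have hupos : 0 < u := lt_trans (by positivity) h
      have hv : 0 < u ^ 2 / (8 * t) := by positivity
      have hexp : Real.exp (-(1 / (8 * t)) * u ^ 2) ≤ (u ^ 2 / (8 * t))⁻¹ := by
        have harg : -(1 / (8 * t)) * u ^ 2 = -(u ^ 2 / (8 * t)) := by ring
        rw [harg, Real.exp_neg]
        apply inv_anti₀ hv
        have := Real.add_one_le_exp (u ^ 2 / (8 * t))
        linarith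
      calc u * Real.exp (-(1 / (8 * t)) * u ^ 2) ≤ u * (u ^ 2 / (8 * t))⁻¹ :=
            mul_le_mul_of_nonneg_left hexp hupos.le
        _ = 8 * t / u := by field_simp
        _ ≤ 8 * t / (2 * Real.sqrt t) := by
            apply div_le_div_of_nonneg_left (by positivity) (by positivity) h.le
        _ = 4 * Real.sqrt t := by
            rw [show 8 * t / (2 * Real.sqrt t) = 4 * (t / Real.sqrt t) by ring,
              Real.div_sqrt]
  calc u * Real.exp (-u ^ 2 / (4 * t))
      = (u * Real.exp (-(1 / (8 * t)) * u ^ 2)) * Real.exp (-(1 / (8 * t)) * u ^ 2) := by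
        rw [h1]; ring
    _ ≤ (4 * Real.sqrt t) * Real.exp (-(1 / (8 * t)) * u ^ 2) :=
        mul_le_mul_of_nonneg_right key (Real.exp_pos _).le
    _ = 4 * Real.sqrt t * Real.exp (-(1 / (8 * t)) * u ^ 2) := by ring

/-- Real Gaussian integrability on Euclidean space. -/
lemma integrable_gaussE (d : ℕ) {b : ℝ} (hb : 0 < b) :
    Integrable (fun v : EuclideanSpace ℝ (Fin d) => Real.exp (-b * ‖v‖ ^ 2)) := by
  have h := (GaussianFourier.integrable_cexp_neg_mul_sq_norm_add
    (V := EuclideanSpace ℝ (Fin d)) (b := (b : ℂ)) (by simpa using hb) 0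
    (0 : EuclideanSpace ℝ (Fin d))).norm
  refine h.congr (Filter.Eventually.of_forall fun v => ?_)
  simp only [zero_mul, add_zero, Complex.norm_exp]
  congr 1
  rw [show -(b : ℂ) * (‖v‖ : ℂ) ^ 2 = ((-b * ‖v‖ ^ 2 : ℝ) : ℂ) by push_cast; ring,
    Complex.ofReal_re]

/-- Pointwise bound of the integrand by `Gfun`. -/
lemma pointwise_bound {d : ℕ} {δ : ℝ} (hδ : δ ∈ Set.Ioo (0 : ℝ) (1 / 2)) (z : SpaceTime d) :
    heatP d z * ‖z.2‖ * rhoSq d δ (pnorm z) ≤ Gfun d δ z := by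
  obtain ⟨t, x⟩ := z
  by_cases ht : 0 < t
  · simp only [heatP, Gfun, ht, if_pos]
    set A := (4 * π * t) ^ (-(d : ℝ) / 2) with hA
    have hA0 : 0 ≤ A := Real.rpow_nonneg (by positivity) _
    have h1 : ‖x‖ * Real.exp (-‖x‖ ^ 2 / (4 * t)) ≤
        4 * Real.sqrt t * Real.exp (-(1 / (8 * t)) * ‖x‖ ^ 2) :=
      gauss_moment_bound ht (norm_nonneg x)
    have h2 : rhoSq d δ (pnorm (t, x)) ≤ wfun d δ t := rhoSq_le_wfun hδ ht x
    have hrnn : 0 ≤ rhoSq d δ (pnorm (t, x)) := rhoSq_nonneg δ _ (pnorm_nonneg _)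
    calc A * Real.exp (-‖x‖ ^ 2 / (4 * t)) * ‖x‖ * rhoSq d δ (pnorm (t, x))
        = A * ((‖x‖ * Real.exp (-‖x‖ ^ 2 / (4 * t))) * rhoSq d δ (pnorm (t, x))) := by ring
      _ ≤ A * ((4 * Real.sqrt t * Real.exp (-(1 / (8 * t)) * ‖x‖ ^ 2)) * wfun d δ t) := by
          apply mul_le_mul_of_nonneg_left _ hA0
          exact mul_le_mul h1 h2 hrnn (by positivity)
      _ = A * (4 * Real.sqrt t) * wfun d δ t * Real.exp (-(1 / (8 * t)) * ‖x‖ ^ 2) := by ring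
  · simp only [heatP, Gfun, ht, if_neg, if_false]
    simp

/-- `Gfun` is integrable. -/
lemma integrable_Gfun (d : ℕ) (hd : d = 2 ∨ d = 3) {δ : ℝ}
    (hδ : δ ∈ Set.Ioo (0 : ℝ) (1 / 2)) : Integrable (Gfun d δ) := by
  have hδ0 : 0 < δ := hδ.1
  have hδ2 : δ < 1 / 2 := hδ.2
  have hd2 : (2 : ℝ) ≤ (d : ℝ) := by rcases hd with h | h <;> simp [h] <;> norm_num
  have hmeas : Measurable (Gfun d δ) := by
    unfold Gfun wfun
    refine Measurable.ite (measurableSet_lt measurable_const measurable_fst) ?_ measurable_const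
    fun_prop
  rw [show (volume : Measure (SpaceTime d)) = Measure.prod volume volume from
    MeasureTheory.Measure.volume_eq_prod _ _]
  rw [integrable_prod_iff (hmeas.aestronglyMeasurable)]
  constructor
  · -- fiberwise integrability
    refine Filter.Eventually.of_forall fun t => ?_
    by_cases ht : 0 < t
    · have : (fun x : EuclideanSpace ℝ (Fin d) => Gfun d δ (t, x)) =
          fun x => ((4 * π * t) ^ (-(d : ℝ) / 2) * (4 * Real.sqrt t) * wfun d δ t) *
            Real.exp (-(1 / (8 * t)) * ‖x‖ ^ 2) := by
        funext x; simp only [Gfun, ht, if_pos]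
      rw [this]
      exact (integrable_gaussE d (by positivity)).const_mul _
    · have : (fun x : EuclideanSpace ℝ (Fin d) => Gfun d δ (t, x)) = fun _ => 0 := by
        funext x; simp only [Gfun, ht, if_neg, if_false]
      rw [this]
      exact integrable_zero _ _ _
  · -- integrability of the marginal
    set C : ℝ := (2 : ℝ) ^ ((d : ℝ) / 2) * 4 with hC
    have hC0 : 0 ≤ C := by positivity
    have hcomp : (fun t : ℝ => ∫ x : EuclideanSpace ℝ (Fin d), ‖Gfun d δ (t, x)‖) =
        Set.indicator (Set.Ioi 0) (fun t => C * (Real.sqrt t * wfun d δ t)) := by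
      funext t
      by_cases ht : 0 < t
      · have hw0 : 0 ≤ wfun d δ t :=
          le_min (Real.rpow_nonneg ht.le _) (Real.rpow_nonneg ht.le _)
        have hnorm : ∀ x : EuclideanSpace ℝ (Fin d), ‖Gfun d δ (t, x)‖ = Gfun d δ (t, x) := by
          intro x
          rw [Real.norm_eq_abs, abs_of_nonneg]
          simp only [Gfun, ht, if_pos]
          have : (0:ℝ) ≤ (4 * π * t) ^ (-(d : ℝ) / 2) := Real.rpow_nonneg (by positivity) _
          positivity
        simp only [hnorm]
        have hGt : (fun x : EuclideanSpace ℝ (Fin d) => Gfun d δ (t, x)) =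
            fun x => ((4 * π * t) ^ (-(d : ℝ) / 2) * (4 * Real.sqrt t) * wfun d δ t) *
              Real.exp (-(1 / (8 * t)) * ‖x‖ ^ 2) := by
          funext x; simp only [Gfun, ht, if_pos]
        rw [hGt, integral_const_mul,
          GaussianFourier.integral_rexp_neg_mul_sq_norm (by positivity : (0:ℝ) < 1 / (8 * t))]
        rw [Set.indicator_of_mem (Set.mem_Ioi.mpr ht)]
        have hrank : (Module.finrank ℝ (EuclideanSpace ℝ (Fin d)) : ℝ) = (d : ℝ) := by
          rw [finrank_euclideanSpace_fin]
        rw [hrank]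
        have h8 : π / (1 / (8 * t)) = (4 * π * t) * 2 := by field_simp; ring
        rw [h8, Real.mul_rpow (x := 4 * π * t) (y := 2) (by positivity) (by norm_num)]
        have hkey : (4 * π * t) ^ (-(d : ℝ) / 2) * (4 * π * t) ^ ((d : ℝ) / 2) = 1 := by
          rw [← Real.rpow_add (by positivity),
            show -(d : ℝ) / 2 + (d : ℝ) / 2 = 0 by ring, Real.rpow_zero]
        calc (4 * π * t) ^ (-(d : ℝ) / 2) * (4 * Real.sqrt t) * wfun d δ t *
              ((4 * π * t) ^ ((d : ℝ) / 2) * 2 ^ ((d : ℝ) / 2))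
            = ((4 * π * t) ^ (-(d : ℝ) / 2) * (4 * π * t) ^ ((d : ℝ) / 2)) *
              (2 ^ ((d : ℝ) / 2) * 4 * (Real.sqrt t * wfun d δ t)) := by ring
          _ = C * (Real.sqrt t * wfun d δ t) := by rw [hkey, one_mul, hC]
      · simp only [Gfun, if_neg ht, norm_zero, integral_zero,
          Set.indicator_of_notMem (by simpa using ht : t ∉ Set.Ioi (0:ℝ))]
    rw [hcomp, integrable_indicator_iff measurableSet_Ioi]
    have hψmeas : Measurable fun t : ℝ => C * (Real.sqrt t * wfun d δ t) := by
      unfold wfun; fun_prop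
    have hsplit : Set.Ioc (0:ℝ) 1 ∪ Set.Ioi 1 = Set.Ioi 0 :=
      Set.Ioc_union_Ioi_eq_Ioi zero_le_one
    rw [← hsplit]
    apply MeasureTheory.IntegrableOn.union
    · -- on (0,1]
      refine Integrable.mono' (g := fun _ => C)
        (integrableOn_const measure_Ioc_lt_top.ne)
        hψmeas.aestronglyMeasurable.restrict ?_
      rw [ae_restrict_iff' measurableSet_Ioc]
      refine Filter.Eventually.of_forall fun t ht => ?_
      obtain ⟨ht0, ht1⟩ := ht
      have hw0 : 0 ≤ wfun d δ t :=
        le_min (Real.rpow_nonneg ht0.le _) (Real.rpow_nonneg ht0.le _)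
      rw [Real.norm_eq_abs, abs_of_nonneg (by positivity)]
      have h1 : Real.sqrt t * wfun d δ t ≤ Real.sqrt t * t ^ ((2 * δ - 1) / 2) :=
        mul_le_mul_of_nonneg_left (min_le_left _ _) (Real.sqrt_nonneg t)
      rw [sqrt_mul_rpow ht0] at h1
      have h2 : t ^ (1 / 2 + (2 * δ - 1) / 2) ≤ 1 :=
        Real.rpow_le_one ht0.le ht1 (by linarith)
      calc C * (Real.sqrt t * wfun d δ t) ≤ C * 1 := by
            apply mul_le_mul_of_nonneg_left _ hC0
            exact le_trans h1 h2
        _ = C := mul_one C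
    · -- on (1,∞)
      have he : -((d : ℝ) + 1) / 2 - δ < -1 := by linarith
      refine Integrable.mono' (g := fun t => C * t ^ (-((d : ℝ) + 1) / 2 - δ))
        ((integrableOn_Ioi_rpow_of_lt he one_pos).const_mul C)
        hψmeas.aestronglyMeasurable.restrict ?_
      rw [ae_restrict_iff' measurableSet_Ioi]
      refine Filter.Eventually.of_forall fun t ht => ?_
      have ht1 : 1 < t := ht
      have ht0 : 0 < t := lt_trans one_pos ht1
      have hw0 : 0 ≤ wfun d δ t :=
        le_min (Real.rpow_nonneg ht0.le _) (Real.rpow_nonneg ht0.le _)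
      rw [Real.norm_eq_abs, abs_of_nonneg (by positivity)]
      have h1 : Real.sqrt t * wfun d δ t ≤ Real.sqrt t * t ^ (-((d : ℝ) + 2) / 2 - δ) :=
        mul_le_mul_of_nonneg_left (min_le_right _ _) (Real.sqrt_nonneg t)
      rw [sqrt_mul_rpow ht0] at h1
      have hexp : 1 / 2 + (-((d : ℝ) + 2) / 2 - δ) = -((d : ℝ) + 1) / 2 - δ := by ring
      rw [hexp] at h1
      exact mul_le_mul_of_nonneg_left h1 hC0

theorem stmt6 (d : ℕ) (hd : d = 2 ∨ d = 3) (δ : ℝ) (hδ : δ ∈ Set.Ioo (0 : ℝ) (1 / 2)) :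
    Integrable (fun z : SpaceTime d => heatP d z * ‖z.2‖ * rhoSq d δ (pnorm z)) ∧
    ∀ κ : SpaceTime d → ℝ, Measurable κ →
      (∀ z : SpaceTime d, z ≠ 0 → |κ z| ≤ rhoSq d δ (pnorm z)) →
      Integrable (fun z : SpaceTime d => (heatP d z * κ z) • z.2) := by
  have hFmeas : Measurable (fun z : SpaceTime d => heatP d z * ‖z.2‖ * rhoSq d δ (pnorm z)) :=
    ((measurable_heatP d).mul measurable_snd.norm).mul (measurable_rhoSq_pnorm δ)
  have hFnn : ∀ z : SpaceTime d, 0 ≤ heatP d z * ‖z.2‖ * rhoSq d δ (pnorm z) := fun z =>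
    mul_nonneg (mul_nonneg (heatP_nonneg d z) (norm_nonneg _))
      (rhoSq_nonneg δ _ (pnorm_nonneg _))
  have hF : Integrable (fun z : SpaceTime d => heatP d z * ‖z.2‖ * rhoSq d δ (pnorm z)) := by
    refine (integrable_Gfun d hd hδ).mono' hFmeas.aestronglyMeasurable ?_
    refine Filter.Eventually.of_forall fun z => ?_
    rw [Real.norm_eq_abs, abs_of_nonneg (hFnn z)]
    exact pointwise_bound hδ z
  refine ⟨hF, fun κ hκ hκb => ?_⟩
  refine hF.mono' ?_ ?_
  · exact (((measurable_heatP d).mul hκ).smul measurable_snd).aestronglyMeasurable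
  · refine Filter.Eventually.of_forall fun z => ?_
    rw [norm_smul, Real.norm_eq_abs, abs_mul, abs_of_nonneg (heatP_nonneg d z)]
    by_cases hz : z = 0
    · subst hz
      have : heatP d (0 : SpaceTime d) = 0 := by
        unfold heatP; simp
      simp [this]
    · calc heatP d z * |κ z| * ‖z.2‖ ≤ heatP d z * rhoSq d δ (pnorm z) * ‖z.2‖ :=
          mul_le_mul_of_nonneg_right
            (mul_le_mul_of_nonneg_left (hκb z hz) (heatP_nonneg d z)) (norm_nonneg _)
        _ = heatP d z * ‖z.2‖ * rhoSq d δ (pnorm z) := by ring
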